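/- If both a generalized differentiable codistribution and its annihilator are differentiable, then the codistribution is regular: if the family q ↦ D_q ⊆ ℝⁿ is locally spanned by finitely many continuous sections, and the annihilator family q ↦ D_q° = {v ∈ ℝⁿ : ⟨α, v⟩ = 0 for all α ∈ D_q} is also locally spanned by finitely many continuous sections, then the rank function ρ(q) = dim D_q is locally constant on X. -/

import Mathlib

open Matrix

lemma aux_semicont {X : Type*} [TopologicalSpace X] {n : ℕ}
    (F : X → Submodule ℝ (Fin n → ℝ)) (q : X)
    (U : Set X) (hU : IsOpen U) (hq : q ∈ U) (l : ℕ) (ω : Fin l → X → (Fin n → ℝ))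
    (hc : ∀ i, ContinuousOn (ω i) U)
    (hspan : ∀ q' ∈ U, F q' = Submodule.span ℝ (Set.range fun i => ω i q')) :
    ∃ V : Set X, IsOpen V ∧ q ∈ V ∧ V ⊆ U ∧
      ∀ q' ∈ V, Module.finrank ℝ (F q) ≤ Module.finrank ℝ (F q') := by
  obtain ⟨b, hb_sub, hb_span, hb_li⟩ :=
    exists_linearIndependent ℝ (Set.range fun i => ω i q)
  have hbfin : b.Finite := (Set.finite_range _).subset hb_sub
  haveI : Fintype b := hbfin.fintype
  have hcard : Module.finrank ℝ (F q) = Fintype.card b := by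
    rw [hspan q hq, ← hb_span, finrank_span_set_eq_card hb_li, Set.toFinset_card]
  -- choose index for each element of b
  have hchoice : ∀ x : b, ∃ i : Fin l, ω i q = (x : Fin n → ℝ) := fun x => hb_sub x.2
  choose φ hφ using hchoice
  set Φ : X → (b → (Fin n → ℝ)) := fun q' x => ω (φ x) q' with hΦ
  have hΦcont : ContinuousOn Φ U := continuousOn_pi.2 fun x => hc (φ x)
  have hΦq : LinearIndependent ℝ (Φ q) := by
    have : Φ q = fun x : b => (x : Fin n → ℝ) := funext fun x => hφ x
    rw [this]; exact hb_li
  have hopen : IsOpen {g : b → (Fin n → ℝ) | LinearIndependent ℝ g} :=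
    isOpen_setOf_linearIndependent
  refine ⟨U ∩ Φ ⁻¹' {g | LinearIndependent ℝ g},
    hΦcont.isOpen_inter_preimage hU hopen, ⟨hq, hΦq⟩, Set.inter_subset_left, ?_⟩
  rintro q' ⟨hq'U, hli⟩
  have hmem : ∀ x : b, Φ q' x ∈ F q' := fun x => by
    rw [hspan q' hq'U]
    exact Submodule.subset_span ⟨φ x, rfl⟩
  have hli' : LinearIndependent ℝ (fun x : b => (⟨Φ q' x, hmem x⟩ : F q')) :=
    LinearIndependent.of_comp (F q').subtype (by exact hli)
  rw [hcard]
  exact hli'.fintype_card_le_finrank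

lemma aux_ann {n : ℕ} (S K : Submodule ℝ (Fin n → ℝ))
    (hK : (K : Set (Fin n → ℝ)) = {w | ∀ α ∈ S, α ⬝ᵥ w = 0}) :
    Module.finrank ℝ S + Module.finrank ℝ K = n := by
  set e : (Fin n → ℝ) ≃ₗ[ℝ] EuclideanSpace ℝ (Fin n) :=
    (WithLp.linearEquiv 2 ℝ (Fin n → ℝ)).symm with he
  have hmap : K.map (e : (Fin n → ℝ) →ₗ[ℝ] EuclideanSpace ℝ (Fin n)) = (S.map (e : (Fin n → ℝ) →ₗ[ℝ] EuclideanSpace ℝ (Fin n)))ᗮ := by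
    ext y
    rw [Submodule.mem_map_equiv, Submodule.mem_orthogonal]
    constructor
    · intro hy x hx
      rw [Submodule.mem_map_equiv] at hx
      have := (Set.ext_iff.mp hK (e.symm y)).mp hy (e.symm x) hx
      simp only [PiLp.inner_apply, RCLike.inner_apply, starRingEnd_apply, star_trivial]
      simpa [dotProduct, he, mul_comm] using this
    · intro hy
      rw [← SetLike.mem_coe, hK]
      intro α hα
      have := hy (e α) (Submodule.mem_map_of_mem hα)
      simp only [PiLp.inner_apply, RCLike.inner_apply, starRingEnd_apply, star_trivial] at this
      simpa [dotProduct, he, mul_comm] using this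
  have h1 : Module.finrank ℝ (S.map (e : (Fin n → ℝ) →ₗ[ℝ] EuclideanSpace ℝ (Fin n))) + Module.finrank ℝ ((S.map (e : (Fin n → ℝ) →ₗ[ℝ] EuclideanSpace ℝ (Fin n)))ᗮ) = n := by
    rw [Submodule.finrank_add_finrank_orthogonal]
    exact finrank_euclideanSpace_fin
  rw [← hmap] at h1
  rwa [LinearEquiv.finrank_map_eq, LinearEquiv.finrank_map_eq] at h1

/-- If both a generalized differentiable codistribution and its annihilator are
differentiable (i.e. both are locally spanned by finitely many continuous sections),
then the codistribution is regular: its rank function `q ↦ dim (D q)` is locally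
constant. The annihilator assigns to `q` the subspace
`{v ∈ ℝⁿ : ⟨α, v⟩ = 0 for all α ∈ D q}`. -/
theorem regular_of_codistribution_and_annihilator_differentiable
    {X : Type*} [TopologicalSpace X] {n : ℕ}
    (D : X → Submodule ℝ (Fin n → ℝ))
    (hD : ∀ q : X, ∃ (U : Set X) (_ : IsOpen U) (_ : q ∈ U) (l : ℕ)
      (ω : Fin l → X → (Fin n → ℝ)),
        (∀ i, ContinuousOn (ω i) U) ∧
        (∀ q' ∈ U, D q' = Submodule.span ℝ (Set.range fun i => ω i q')))
    (hDann : ∀ q : X, ∃ (U : Set X) (_ : IsOpen U) (_ : q ∈ U) (l : ℕ)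
      (v : Fin l → X → (Fin n → ℝ)),
        (∀ i, ContinuousOn (v i) U) ∧
        (∀ q' ∈ U, (Submodule.span ℝ (Set.range fun i => v i q') : Set (Fin n → ℝ))
          = {w : Fin n → ℝ | ∀ α ∈ D q', α ⬝ᵥ w = 0})) :
    IsLocallyConstant (fun q => Module.finrank ℝ (D q)) := by
  rw [IsLocallyConstant.iff_exists_open]
  intro q
  obtain ⟨U₁, hU₁, hqU₁, l₁, ω, hcω, hsω⟩ := hD q
  obtain ⟨V₁, hV₁, hqV₁, _, hV₁le⟩ := aux_semicont D q U₁ hU₁ hqU₁ l₁ ω hcω hsω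
  obtain ⟨U₂, hU₂, hqU₂, l₂, v, hcv, hsv⟩ := hDann q
  set F₂ : X → Submodule ℝ (Fin n → ℝ) :=
    fun q'' => Submodule.span ℝ (Set.range fun i => v i q'') with hF₂
  obtain ⟨V₂, hV₂, hqV₂, hV₂U₂, hV₂le⟩ :=
    aux_semicont F₂ q U₂ hU₂ hqU₂ l₂ v hcv (fun _ _ => rfl)
  refine ⟨V₁ ∩ V₂, hV₁.inter hV₂, ⟨hqV₁, hqV₂⟩, ?_⟩
  rintro q' ⟨hq'V₁, hq'V₂⟩
  have h1 := hV₁le q' hq'V₁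
  have h2 := hV₂le q' hq'V₂
  have h3 := aux_ann (D q) (F₂ q) (hsv q hqU₂)
  have h4 := aux_ann (D q') (F₂ q') (hsv q' (hV₂U₂ hq'V₂))
  omega
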